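/- For every real α > 2 and every x ≥ 0, the SIR coverage function satisfies the lower bound P_α(x) ≥ (α/(2π))·sin(2π/α)·(1 + x)^(−2/α). -/

import Mathlib

open MeasureTheory Filter Real Set


lemma contOn_aux {q : ℝ} (hq : 0 < q) (s : Set ℝ) (hs : ∀ t ∈ s, 0 ≤ t) :
    ContinuousOn (fun t : ℝ => (1 + t ^ q)⁻¹) s := by
  intro t ht
  have h1 : ContinuousAt (fun t : ℝ => t ^ q) t := by
    rcases eq_or_ne t 0 with h | h
    · exact Real.continuousAt_rpow_const t q (Or.inr hq.le)
    · exact Real.continuousAt_rpow_const t q (Or.inl h)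
  have h2 : (0:ℝ) < 1 + t ^ q := by
    have := Real.rpow_nonneg (hs t ht) q
    linarith
  exact ((continuousAt_const.add h1).inv₀ h2.ne').continuousWithinAt

lemma integrableOn_aux {q : ℝ} (hq : 1 < q) :
    IntegrableOn (fun u : ℝ => (1 + u ^ q)⁻¹) (Ioi (0:ℝ)) := by
  have hmeas : AEStronglyMeasurable (fun u : ℝ => (1 + u ^ q)⁻¹) (volume.restrict (Ioi 0)) :=
    (((measurable_const.add (measurable_id.pow_const q)).inv)).aestronglyMeasurable
  rw [show Ioi (0:ℝ) = Ioc 0 1 ∪ Ioi 1 by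
    rw [Ioc_union_Ioi_eq_Ioi]; norm_num]
  refine IntegrableOn.union ?_ ?_
  · refine (contOn_aux (by linarith) (Icc 0 1) (fun t ht => ht.1)).integrableOn_Icc.mono_set
      Ioc_subset_Icc_self
  · have hint : IntegrableOn (fun u : ℝ => u ^ (-q)) (Ioi (1:ℝ)) :=
      integrableOn_Ioi_rpow_of_lt (by linarith) one_pos
    refine Integrable.mono hint (hmeas.mono_set (by intro u hu; exact lt_trans one_pos (show (1:ℝ) < u from hu))) ?_
    filter_upwards [ae_restrict_mem measurableSet_Ioi] with u hu
    have hu1 : (1:ℝ) ≤ u := le_of_lt hu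
    have h0 : (0:ℝ) < u ^ q := Real.rpow_pos_of_pos (lt_of_lt_of_le one_pos hu1) q
    rw [Real.norm_eq_abs, Real.norm_eq_abs, abs_of_nonneg (by positivity),
      abs_of_nonneg (Real.rpow_nonneg (by linarith) _), Real.rpow_neg (by linarith)]
    exact inv_anti₀ h0 (by linarith)

lemma value_aux {q : ℝ} (hq : 1 < q) :
    ∫ u in Ioi (0:ℝ), (1 + u ^ q)⁻¹ =
      Real.Gamma (1/q + 1) * Real.Gamma (1 - 1/q) := by
  have hq0 : (0:ℝ) < q := by linarith
  have hδ : 0 < 1 - 1/q := by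
    have : 1/q < 1 := by rw [div_lt_one hq0]; exact hq
    linarith
  set μ := volume.restrict (Ioi (0:ℝ)) with hμ
  have hmeas : AEStronglyMeasurable
      (Function.uncurry fun s u : ℝ => Real.exp (-s) * Real.exp (-s * u ^ q)) (μ.prod μ) := by
    apply Measurable.aestronglyMeasurable
    exact ((measurable_fst.neg.exp).mul
      (((measurable_fst.neg).mul
        ((Real.continuous_rpow_const hq0.le).measurable.comp measurable_snd)).exp))
  have hinner : ∀ s ∈ Ioi (0:ℝ),
      (∫ u in Ioi (0:ℝ), Real.exp (-s) * Real.exp (-s * u ^ q))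
      = Real.exp (-s) * (s ^ (-1/q) * Real.Gamma (1/q + 1)) := by
    intro s hs
    rw [integral_const_mul, integral_exp_neg_mul_rpow hq0 hs]
  have hintu : ∀ s ∈ Ioi (0:ℝ),
      Integrable (fun u => Real.exp (-s) * Real.exp (-s * u ^ q)) μ := by
    intro s hs
    refine Integrable.const_mul ?_ _
    have h1 := integrableOn_rpow_mul_exp_neg_mul_rpow (by norm_num : (-1:ℝ) < 0) hq0 hs
    refine (h1.congr_fun (fun u hu => ?_) measurableSet_Ioi : IntegrableOn _ _ _)
    simp [Real.rpow_zero]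
  have hGi : Integrable (fun s : ℝ => Real.Gamma (1/q+1) *
      (Real.exp (-s) * s ^ ((1 - 1/q) - 1))) μ :=
    (Real.GammaIntegral_convergent hδ).const_mul _
  have hprod : Integrable
      (Function.uncurry fun s u : ℝ => Real.exp (-s) * Real.exp (-s * u ^ q)) (μ.prod μ) := by
    rw [integrable_prod_iff hmeas]
    refine ⟨(ae_restrict_mem measurableSet_Ioi).mono (fun s hs => hintu s hs), ?_⟩
    refine hGi.congr ?_
    filter_upwards [ae_restrict_mem measurableSet_Ioi] with s hs
    have hnorm : (∫ u, ‖Real.exp (-s) * Real.exp (-s * u ^ q)‖ ∂μ)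
        = ∫ u in Ioi (0:ℝ), Real.exp (-s) * Real.exp (-s * u ^ q) := by
      refine integral_congr_ae ?_
      filter_upwards [ae_restrict_mem measurableSet_Ioi] with u hu
      exact norm_of_nonneg (by positivity)
    show _ = ∫ u, ‖Real.exp (-s) * Real.exp (-s * u ^ q)‖ ∂μ
    rw [hnorm, hinner s hs, show (1:ℝ) - 1/q - 1 = -1/q by ring]
    ring
  have hswap := integral_integral_swap hprod
  -- LHS of swap
  have hL : (∫ s, ∫ u, Real.exp (-s) * Real.exp (-s * u ^ q) ∂μ ∂μ)
      = Real.Gamma (1/q + 1) * Real.Gamma (1 - 1/q) := by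
    rw [setIntegral_congr_fun measurableSet_Ioi (fun s hs => hinner s hs)]
    have : (∫ s in Ioi (0:ℝ), Real.exp (-s) * (s ^ (-1/q) * Real.Gamma (1/q + 1)))
        = Real.Gamma (1/q+1) * ∫ s in Ioi (0:ℝ), s ^ ((1 - 1/q) - 1) * Real.exp (-(1*s)) := by
      rw [← integral_const_mul]
      refine setIntegral_congr_fun measurableSet_Ioi (fun s hs => ?_)
      rw [show (1:ℝ) - 1/q - 1 = -1/q by ring]
      simp; ring
    rw [this, integral_rpow_mul_exp_neg_mul_Ioi hδ one_pos]
    simp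
  -- RHS of swap
  have hR : (∫ u, ∫ s, Real.exp (-s) * Real.exp (-s * u ^ q) ∂μ ∂μ)
      = ∫ u in Ioi (0:ℝ), (1 + u ^ q)⁻¹ := by
    refine setIntegral_congr_fun measurableSet_Ioi (fun u hu => ?_)
    have hb : (0:ℝ) < 1 + u ^ q := by
      have := Real.rpow_nonneg (le_of_lt (mem_Ioi.mp hu)) q
      linarith
    have : (∫ s in Ioi (0:ℝ), Real.exp (-s) * Real.exp (-s * u ^ q))
        = ∫ s in Ioi (0:ℝ), s ^ ((1:ℝ) - 1) * Real.exp (-((1 + u ^ q) * s)) := by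
      refine setIntegral_congr_fun measurableSet_Ioi (fun s hs => ?_)
      rw [← Real.exp_add, show (-s) + -s * u ^ q = -((1 + u ^ q) * s) by ring]
      simp
    rw [this, integral_rpow_mul_exp_neg_mul_Ioi one_pos hb]
    simp [Real.Gamma_one]
  rw [← hR, ← hswap, hL]
lemma key_ineq {q : ℝ} (hq : 1 < q) {a : ℝ} (ha : 0 ≤ a)
    (hC : 1 ≤ ∫ u in Ioi (0:ℝ), (1 + u ^ q)⁻¹)
    (hint : IntegrableOn (fun u : ℝ => (1 + u ^ q)⁻¹) (Ioi (0:ℝ))) :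
    a + (∫ u in Ioi a, (1 + u ^ q)⁻¹)
      ≤ (∫ u in Ioi (0:ℝ), (1 + u ^ q)⁻¹) * (1 + a ^ q) ^ (1/q) := by
  have hq0 : (0:ℝ) < q := by linarith
  set C := ∫ u in Ioi (0:ℝ), (1 + u ^ q)⁻¹ with hCdef
  have hpos : ∀ t : ℝ, 0 ≤ t → (0:ℝ) < 1 + t ^ q := fun t ht => by
    have := Real.rpow_nonneg ht q; linarith
  -- continuity facts
  have hc1 : ContinuousOn (fun t : ℝ => (1 + t ^ q)⁻¹) (Icc 0 a) :=
    contOn_aux hq0 _ (fun t ht => ht.1)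
  have hc2 : ContinuousOn (fun t : ℝ => t ^ (q-1) * (1 + t ^ q) ^ (1/q - 1)) (Icc 0 a) := by
    intro t ht
    have h1 : ContinuousAt (fun t : ℝ => t ^ (q-1)) t :=
      Real.continuousAt_rpow_const t _ (Or.inr (by linarith))
    have h2 : ContinuousAt (fun t : ℝ => (1 + t ^ q) ^ (1/q - 1)) t := by
      refine ContinuousAt.rpow_const ?_ (Or.inl (hpos t ht.1).ne')
      exact continuousAt_const.add (Real.continuousAt_rpow_const t q (Or.inr hq0.le))
    exact (h1.mul h2).continuousWithinAt
  -- interval integrability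
  have hI1 : IntervalIntegrable (fun t : ℝ => (1 + t ^ q)⁻¹) volume 0 a := by
    rw [intervalIntegrable_iff_integrableOn_Icc_of_le ha]
    exact hc1.integrableOn_Icc
  have hI2 : IntervalIntegrable (fun t : ℝ => t ^ (q-1) * (1 + t ^ q) ^ (1/q - 1)) volume 0 a := by
    rw [intervalIntegrable_iff_integrableOn_Icc_of_le ha]
    exact hc2.integrableOn_Icc
  -- FTC for g t = (1+t^q)^(1/q)
  have hderiv : ∀ t ∈ uIcc (0:ℝ) a,
      HasDerivAt (fun t : ℝ => (1 + t ^ q) ^ (1/q))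
        (t ^ (q-1) * (1 + t ^ q) ^ (1/q - 1)) t := by
    intro t ht
    rw [uIcc_of_le ha] at ht
    have hinner : HasDerivAt (fun t : ℝ => 1 + t ^ q) (q * t ^ (q-1)) t :=
      (Real.hasDerivAt_rpow_const (Or.inr hq.le)).const_add 1
    have houter := hinner.rpow_const (p := 1/q) (Or.inl (hpos t ht.1).ne')
    convert houter using 1
    field_simp
  have hFTC : (∫ t in (0:ℝ)..a, t ^ (q-1) * (1 + t ^ q) ^ (1/q - 1))
      = (1 + a ^ q) ^ (1/q) - 1 := by
    rw [intervalIntegral.integral_eq_sub_of_hasDerivAt hderiv hI2]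
    rw [Real.zero_rpow hq0.ne', add_zero, Real.one_rpow]
  -- pointwise comparison
  have hpt : ∀ t ∈ Icc (0:ℝ) a,
      1 - (1 + t ^ q)⁻¹ ≤ t ^ (q-1) * (1 + t ^ q) ^ (1/q - 1) := by
    intro t ht
    have ht0 : (0:ℝ) ≤ t := ht.1
    have hb := hpos t ht0
    rcases eq_or_lt_of_le ht0 with h | h
    · rw [← h, Real.zero_rpow hq0.ne', Real.zero_rpow (by linarith : q - 1 ≠ 0)]
      simp
    · have h1 : 1 - (1 + t ^ q)⁻¹ = t ^ q * (1 + t ^ q)⁻¹ := by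
        field_simp; ring
      have h2 : t ^ q = t ^ (q-1) * t := by
        rw [← Real.rpow_add_one h.ne' (q-1)]; ring_nf
      have h3 : t ≤ (1 + t ^ q) ^ (1/q) := by
        calc t = (t ^ q) ^ (1/q) := by
                rw [← Real.rpow_mul ht0, mul_one_div, div_self hq0.ne', Real.rpow_one]
              _ ≤ (1 + t ^ q) ^ (1/q) := by
                exact Real.rpow_le_rpow (Real.rpow_nonneg ht0 q) (by linarith) (by positivity)
      have h4 : (1 + t ^ q) ^ (1/q - 1) = (1 + t ^ q) ^ (1/q) * (1 + t ^ q)⁻¹ := by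
        rw [show 1/q - 1 = 1/q + (-1) by ring, Real.rpow_add hb, Real.rpow_neg_one]
      rw [h1, h4]
      have hh : t * (1 + t ^ q)⁻¹ ≤ (1 + t ^ q) ^ (1/q) * (1 + t ^ q)⁻¹ :=
        mul_le_mul_of_nonneg_right h3 (by positivity)
      calc t ^ q * (1 + t ^ q)⁻¹ = t ^ (q-1) * (t * (1 + t ^ q)⁻¹) := by rw [h2]; ring
        _ ≤ t ^ (q-1) * ((1 + t ^ q) ^ (1/q) * (1 + t ^ q)⁻¹) :=
            mul_le_mul_of_nonneg_left hh (Real.rpow_nonneg ht0 _)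
  -- main comparison of interval integrals
  have hmono : (∫ t in (0:ℝ)..a, (1 - (1 + t ^ q)⁻¹))
      ≤ ∫ t in (0:ℝ)..a, t ^ (q-1) * (1 + t ^ q) ^ (1/q - 1) := by
    refine intervalIntegral.integral_mono_on ha ?_ hI2 ?_
    · exact (intervalIntegrable_const).sub hI1
    · exact hpt
  have hsplit1 : (∫ t in (0:ℝ)..a, (1 - (1 + t ^ q)⁻¹))
      = a - ∫ t in (0:ℝ)..a, (1 + t ^ q)⁻¹ := by
    rw [intervalIntegral.integral_sub intervalIntegrable_const hI1]
    simp
  -- splitting of Ioi 0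
  have hunion : Ioc (0:ℝ) a ∪ Ioi a = Ioi 0 := Ioc_union_Ioi_eq_Ioi ha
  have hdisj : Disjoint (Ioc (0:ℝ) a) (Ioi a) := by
    refine Set.disjoint_left.mpr (fun t ht1 ht2 => ?_)
    exact absurd ht2 (not_lt.mpr ht1.2)
  have hsplit2 : C = (∫ t in Ioc (0:ℝ) a, (1 + t ^ q)⁻¹) + ∫ u in Ioi a, (1 + u ^ q)⁻¹ := by
    rw [hCdef, ← hunion]
    exact setIntegral_union hdisj measurableSet_Ioi
      (hint.mono_set (by rw [← hunion]; exact subset_union_left))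
      (hint.mono_set (by rw [← hunion]; exact subset_union_right))
  have hIoc : (∫ t in (0:ℝ)..a, (1 + t ^ q)⁻¹) = ∫ t in Ioc (0:ℝ) a, (1 + t ^ q)⁻¹ :=
    intervalIntegral.integral_of_le ha
  -- assemble
  have hge1 : (1:ℝ) ≤ (1 + a ^ q) ^ (1/q) := by
    calc (1:ℝ) = 1 ^ (1/q) := (Real.one_rpow _).symm
      _ ≤ (1 + a ^ q) ^ (1/q) :=
        Real.rpow_le_rpow zero_le_one (by nlinarith [Real.rpow_nonneg ha q]) (by positivity)
  have hkey : a - (∫ t in Ioc (0:ℝ) a, (1 + t ^ q)⁻¹) ≤ (1 + a ^ q) ^ (1/q) - 1 := by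
    rw [← hIoc, ← hsplit1, ← hFTC]; exact hmono
  nlinarith [hsplit2, hkey, hge1, hC]

lemma subst_aux {q x : ℝ} (hq : 1 < q) (hx : 0 < x) :
    (∫ w in Ioi (1:ℝ), x / (x + w ^ q))
      = x ^ (1/q) * ∫ u in Ioi (x ^ (-(1/q))), (1 + u ^ q)⁻¹ := by
  have hq0 : (0:ℝ) < q := by linarith
  have hc : (0:ℝ) < x ^ (1/q) := Real.rpow_pos_of_pos hx _
  have ha : (0:ℝ) < x ^ (-(1/q)) := Real.rpow_pos_of_pos hx _
  have hca : x ^ (1/q) * x ^ (-(1/q)) = 1 := by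
    rw [← Real.rpow_add hx]; simp
  have h := integral_comp_mul_left_Ioi (fun w => x / (x + w ^ q)) (x ^ (-(1/q))) hc
  rw [hca] at h
  simp only [smul_eq_mul] at h
  rw [eq_comm, inv_mul_eq_iff_eq_mul₀ hc.ne'] at h
  rw [h]
  congr 1
  refine setIntegral_congr_fun measurableSet_Ioi (fun u hu => ?_)
  have hu0 : (0:ℝ) < u := lt_trans ha hu
  have hcq : (x ^ (1/q)) ^ q = x := by
    rw [← Real.rpow_mul hx.le, one_div_mul_cancel hq0.ne', Real.rpow_one]
  have huq : (0:ℝ) ≤ u ^ q := Real.rpow_nonneg hu0.le q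
  rw [Real.mul_rpow hc.le hu0.le, hcq]
  rw [show x + x * u ^ q = x * (1 + u ^ q) by ring, div_mul_eq_div_div]
  rw [div_self hx.ne', one_div]

lemma C_eq {q : ℝ} (hq : 1 < q) :
    ∫ u in Ioi (0:ℝ), (1 + u ^ q)⁻¹ = (1/q) * (π / Real.sin (π * (1/q))) := by
  have hq0 : (0:ℝ) < q := by linarith
  rw [value_aux hq, Real.Gamma_add_one (by positivity : (1:ℝ)/q ≠ 0), mul_assoc,
    Real.Gamma_mul_Gamma_one_sub]

lemma sin_aux {q : ℝ} (hq : 1 < q) : 0 < Real.sin (π * (1/q)) := by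
  apply Real.sin_pos_of_pos_of_lt_pi
  · positivity
  · rw [mul_one_div]
    exact div_lt_self pi_pos hq

lemma C_ge_one {q : ℝ} (hq : 1 < q) : 1 ≤ ∫ u in Ioi (0:ℝ), (1 + u ^ q)⁻¹ := by
  have hq0 : (0:ℝ) < q := by linarith
  rw [C_eq hq]
  have hsin := sin_aux hq
  have hle : Real.sin (π * (1/q)) ≤ π * (1/q) := Real.sin_le (by positivity)
  rw [show (1:ℝ)/q * (π / Real.sin (π * (1/q))) = (π * (1/q)) / Real.sin (π * (1/q)) by ring]
  rw [le_div_iff₀ hsin, one_mul]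
  exact hle

/-- The closed-form downlink SIR coverage denominator:
`h α x = 1 + ∫_1^∞ x / (x + w^(α/2)) dw`. -/
noncomputable def hcov (α x : ℝ) : ℝ := 1 + ∫ w in Set.Ioi (1 : ℝ), x / (x + w ^ (α / 2))

/-- The SIR coverage function `P_α(x) = h_α(x)⁻¹`. -/
noncomputable def Pcov (α x : ℝ) : ℝ := (hcov α x)⁻¹

/-- For every `α > 2` and `x ≥ 0`, `P_α(x) ≥ (α/(2π))·sin(2π/α)·(1 + x)^(-2/α)`. -/
theorem sir_coverage_lower_bound (α : ℝ) (hα : 2 < α) (x : ℝ) (hx : 0 ≤ x) :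
    (α / (2 * π)) * Real.sin (2 * π / α) * (1 + x) ^ (-(2 / α)) ≤ Pcov α x := by
  have hα0 : (0:ℝ) < α := by linarith
  set q : ℝ := α / 2 with hqdef
  have hq : 1 < q := by rw [hqdef]; linarith
  have hq0 : (0:ℝ) < q := by linarith
  have e1 : 2/α = 1/q := by rw [hqdef]; field_simp
  have e2 : 2 * π / α = π * (1/q) := by rw [hqdef]; field_simp; try ring
  have e3 : α / (2*π) = q / π := by rw [hqdef]; field_simp; try ring
  have hsin := sin_aux hq
  rcases eq_or_lt_of_le hx with h0 | hxpos
  · -- x = 0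
    have hP : Pcov α 0 = 1 := by
      simp [Pcov, hcov]
    rw [← h0, hP, add_zero, Real.one_rpow, mul_one, e2, e3]
    rw [div_mul_eq_mul_div, div_le_one pi_pos]
    calc q * Real.sin (π * (1/q)) ≤ q * (π * (1/q)) := by
          exact mul_le_mul_of_nonneg_left (Real.sin_le (by positivity)) hq0.le
      _ = π := by field_simp
  · -- x > 0
    set C := ∫ u in Ioi (0:ℝ), (1 + u ^ q)⁻¹ with hCdef
    set a : ℝ := x ^ (-(1/q)) with hadef
    have ha : (0:ℝ) < a := Real.rpow_pos_of_pos hxpos _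
    have hC1 : 1 ≤ C := C_ge_one hq
    have hCpos : 0 < C := lt_of_lt_of_le one_pos hC1
    have hK := key_ineq hq ha.le hC1 (integrableOn_aux hq)
    have hsub := subst_aux hq hxpos
    have hxq : (0:ℝ) < x ^ (1/q) := Real.rpow_pos_of_pos hxpos _
    have hxa : x ^ (1/q) * a = 1 := by
      rw [hadef, ← Real.rpow_add hxpos]; simp
    have haq : a ^ q = x⁻¹ := by
      rw [hadef, ← Real.rpow_mul hxpos.le, show -(1/q) * q = -1 by field_simp,
        Real.rpow_neg_one]
    have hNpos : (0:ℝ) < 1 + a ^ q := by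
      have := Real.rpow_nonneg ha.le q
      rw [haq] at this ⊢
      positivity
    have hmulrpow : x ^ (1/q) * (1 + a ^ q) ^ (1/q) = (1+x) ^ (1/q) := by
      rw [← Real.mul_rpow hxpos.le hNpos.le, haq,
        show x * (1 + x⁻¹) = 1 + x by field_simp; ring]
    have hupper : hcov α x ≤ C * (1+x) ^ (1/q) := by
      have hm := mul_le_mul_of_nonneg_left hK hxq.le
      rw [mul_add, hxa] at hm
      calc hcov α x = 1 + x ^ (1/q) * ∫ u in Ioi a, (1 + u ^ q)⁻¹ := by
            rw [hcov, hsub]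
        _ ≤ x ^ (1/q) * (C * (1 + a ^ q) ^ (1/q)) := hm
        _ = C * (1+x) ^ (1/q) := by rw [← hmulrpow]; ring
    have hKnn : 0 ≤ ∫ u in Ioi a, (1 + u ^ q)⁻¹ := by
      refine setIntegral_nonneg measurableSet_Ioi (fun u hu => ?_)
      have : (0:ℝ) < 1 + u ^ q := by
        have := Real.rpow_nonneg (le_of_lt (lt_trans ha hu)) q
        linarith
      positivity
    have hhpos : 0 < hcov α x := by
      rw [hcov, hsub]
      positivity
    have hfin : (C * (1+x) ^ (1/q))⁻¹ ≤ Pcov α x := by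
      rw [Pcov]
      exact inv_anti₀ hhpos hupper
    refine le_trans (le_of_eq ?_) hfin
    rw [e1, e2, e3, hCdef, C_eq hq, Real.rpow_neg (by linarith : (0:ℝ) ≤ 1+x)]
    rw [mul_inv]
    rw [show ((1:ℝ)/q * (π / Real.sin (π * (1/q))))⁻¹ = q / π * Real.sin (π * (1/q)) by
      field_simp]
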